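/- Let (T₁,T₂) and (C₁,C₂) be random vectors in ℝ² with (T₁,T₂) independent of (C₁,C₂). Define Z_i = min(T_i,C_i), Δ_i = 1{T_i ≤ C_i}, T* = min(T₁,T₂), C* = min(C₁,C₂), Z* = min(Z₁,Z₂), Δ* = 1{T* ≤ C*}, and η = 2 meaning Z₁ < Z₂. Fix reals j < t with P{T₂ ≥ t, T₁ = j} > 0 and P{Z₂ ≥ t, Z* = j, Δ* = 1, η = 2} > 0. Then P{T₂ = t, T₁ = j} / P{T₂ ≥ t, T₁ = j} = P{Z₂ = t, Δ₂ = 1, Z* = j, Δ* = 1, η = 2} / P{Z₂ ≥ t, Z* = j, Δ* = 1, η = 2}. -/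

import Mathlib

open MeasureTheory ProbabilityTheory

lemma stmt9_den (a b c d j t : ℝ) (hjt : j < t) :
    (t ≤ min b d ∧ min (min a c) (min b d) = j ∧ min a b ≤ min c d ∧ min a c < min b d)
      ↔ ((t ≤ b ∧ a = j) ∧ (j ≤ c ∧ t ≤ d)) := by
  constructor
  · rintro ⟨h1, h2, h3, h4⟩
    have hb : t ≤ b := le_trans h1 (min_le_left _ _)
    have hd : t ≤ d := le_trans h1 (min_le_right _ _)
    have hac : min a c = j := by
      rcases min_cases (min a c) (min b d) with ⟨he, _⟩ | ⟨he, hle⟩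
      · rw [h2] at he; exact he.symm
      · linarith
    rcases min_cases a c with ⟨he, hle⟩ | ⟨he, hle⟩
    · rw [he] at hac
      exact ⟨⟨hb, hac⟩, by rw [hac] at hle; exact hle, hd⟩
    · exfalso
      have hcj : c = j := he ▸ hac
      have : min c d = j := by rw [hcj]; exact min_eq_left (by linarith)
      have : min a b > j := lt_min (by linarith [hcj ▸ hle]) (by linarith)
      linarith [h3, this]
  · rintro ⟨⟨hb, ha⟩, hc, hd⟩
    have hbd : t ≤ min b d := le_min hb hd
    have hac : min a c = j := ha ▸ min_eq_left (by linarith)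
    refine ⟨hbd, ?_, ?_, by rw [hac]; linarith⟩
    · rw [hac]; exact min_eq_left (by linarith)
    · calc min a b = j := ha ▸ min_eq_left (by linarith)
        _ ≤ min c d := le_min hc (by linarith)

lemma stmt9_num (a b c d j t : ℝ) (hjt : j < t) :
    (min b d = t ∧ b ≤ d ∧ min (min a c) (min b d) = j ∧ min a b ≤ min c d ∧ min a c < min b d)
      ↔ ((b = t ∧ a = j) ∧ (j ≤ c ∧ t ≤ d)) := by
  constructor
  · rintro ⟨h1, h2, h3, h4, h5⟩
    have hbt : b = t := by rw [min_eq_left h2] at h1; exact h1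
    have hrest := (stmt9_den a b c d j t hjt).mp ⟨le_of_eq h1.symm, h3, h4, h5⟩
    exact ⟨⟨hbt, hrest.1.2⟩, hrest.2⟩
  · rintro ⟨⟨hb, ha⟩, hc, hd⟩
    have h2 : b ≤ d := by linarith
    have h1 : min b d = t := by rw [min_eq_left h2]; exact hb
    have hrest := (stmt9_den a b c d j t hjt).mpr ⟨⟨le_of_eq hb.symm, ha⟩, hc, hd⟩
    exact ⟨h1, h2, hrest.2.1, hrest.2.2.1, hrest.2.2.2⟩

theorem stmt9 {Ω : Type*} [MeasurableSpace Ω] (μ : Measure Ω) [IsProbabilityMeasure μ]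
    (T₁ T₂ C₁ C₂ : Ω → ℝ)
    (hT₁ : Measurable T₁) (hT₂ : Measurable T₂)
    (hC₁ : Measurable C₁) (hC₂ : Measurable C₂)
    (hind : IndepFun (fun ω => (T₁ ω, T₂ ω)) (fun ω => (C₁ ω, C₂ ω)) μ)
    (j t : ℝ) (hjt : j < t)
    (hT : 0 < μ {ω | t ≤ T₂ ω ∧ T₁ ω = j})
    (hZ : 0 < μ {ω | t ≤ min (T₂ ω) (C₂ ω) ∧
        min (min (T₁ ω) (C₁ ω)) (min (T₂ ω) (C₂ ω)) = j ∧
        min (T₁ ω) (T₂ ω) ≤ min (C₁ ω) (C₂ ω) ∧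
        min (T₁ ω) (C₁ ω) < min (T₂ ω) (C₂ ω)}) :
    μ {ω | T₂ ω = t ∧ T₁ ω = j} / μ {ω | t ≤ T₂ ω ∧ T₁ ω = j}
      = μ {ω | min (T₂ ω) (C₂ ω) = t ∧ T₂ ω ≤ C₂ ω ∧
            min (min (T₁ ω) (C₁ ω)) (min (T₂ ω) (C₂ ω)) = j ∧
            min (T₁ ω) (T₂ ω) ≤ min (C₁ ω) (C₂ ω) ∧
            min (T₁ ω) (C₁ ω) < min (T₂ ω) (C₂ ω)} /
          μ {ω | t ≤ min (T₂ ω) (C₂ ω) ∧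
            min (min (T₁ ω) (C₁ ω)) (min (T₂ ω) (C₂ ω)) = j ∧
            min (T₁ ω) (T₂ ω) ≤ min (C₁ ω) (C₂ ω) ∧
            min (T₁ ω) (C₁ ω) < min (T₂ ω) (C₂ ω)} := by
  set f : Ω → ℝ × ℝ := fun ω => (T₁ ω, T₂ ω) with hf
  set g : Ω → ℝ × ℝ := fun ω => (C₁ ω, C₂ ω) with hg
  have hSn : MeasurableSet {p : ℝ × ℝ | p.2 = t ∧ p.1 = j} :=
    ((measurable_snd (MeasurableSet.singleton t)).inter
      (measurable_fst (MeasurableSet.singleton j)))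
  have hSd : MeasurableSet {p : ℝ × ℝ | t ≤ p.2 ∧ p.1 = j} :=
    ((measurable_snd measurableSet_Ici).inter
      (measurable_fst (MeasurableSet.singleton j)))
  have hU : MeasurableSet {p : ℝ × ℝ | j ≤ p.1 ∧ t ≤ p.2} :=
    ((measurable_fst measurableSet_Ici).inter
      (measurable_snd measurableSet_Ici))
  have hden : {ω | t ≤ min (T₂ ω) (C₂ ω) ∧
        min (min (T₁ ω) (C₁ ω)) (min (T₂ ω) (C₂ ω)) = j ∧
        min (T₁ ω) (T₂ ω) ≤ min (C₁ ω) (C₂ ω) ∧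
        min (T₁ ω) (C₁ ω) < min (T₂ ω) (C₂ ω)}
      = f ⁻¹' {p : ℝ × ℝ | t ≤ p.2 ∧ p.1 = j} ∩ g ⁻¹' {p : ℝ × ℝ | j ≤ p.1 ∧ t ≤ p.2} := by
    ext ω
    simpa [Set.mem_setOf_eq, and_assoc, hf, hg] using stmt9_den (T₁ ω) (T₂ ω) (C₁ ω) (C₂ ω) j t hjt
  have hnum : {ω | min (T₂ ω) (C₂ ω) = t ∧ T₂ ω ≤ C₂ ω ∧
        min (min (T₁ ω) (C₁ ω)) (min (T₂ ω) (C₂ ω)) = j ∧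
        min (T₁ ω) (T₂ ω) ≤ min (C₁ ω) (C₂ ω) ∧
        min (T₁ ω) (C₁ ω) < min (T₂ ω) (C₂ ω)}
      = f ⁻¹' {p : ℝ × ℝ | p.2 = t ∧ p.1 = j} ∩ g ⁻¹' {p : ℝ × ℝ | j ≤ p.1 ∧ t ≤ p.2} := by
    ext ω
    simpa [Set.mem_setOf_eq, and_assoc] using stmt9_num (T₁ ω) (T₂ ω) (C₁ ω) (C₂ ω) j t hjt
  have hTn : f ⁻¹' {p : ℝ × ℝ | p.2 = t ∧ p.1 = j} = {ω | T₂ ω = t ∧ T₁ ω = j} := rfl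
  have hTd : f ⁻¹' {p : ℝ × ℝ | t ≤ p.2 ∧ p.1 = j} = {ω | t ≤ T₂ ω ∧ T₁ ω = j} := rfl
  have hmn := hind.measure_inter_preimage_eq_mul _ _ hSn hU
  have hmd := hind.measure_inter_preimage_eq_mul _ _ hSd hU
  rw [hnum, hden, hmn, hmd, hTn, hTd]
  have hK0 : μ (g ⁻¹' {p : ℝ × ℝ | j ≤ p.1 ∧ t ≤ p.2}) ≠ 0 := by
    intro h
    rw [hden, hmd, h, mul_zero] at hZ
    exact lt_irrefl _ hZ
  have hKt : μ (g ⁻¹' {p : ℝ × ℝ | j ≤ p.1 ∧ t ≤ p.2}) ≠ ⊤ := measure_ne_top μ _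
  rw [ENNReal.mul_div_mul_right _ _ hK0 hKt]
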